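/- Suppose ℙ(X₁ > 0) ∈ (0,1) and ℙ(X₁ < 0) ∈ (0,1). Then I_Lo(x) > 0 for every x ∈ (θ_μ, ∞]. -/

import Mathlib

open MeasureTheory Filter Metric Set
open scoped ENNReal Classical

noncomputable section

/-- Epigraph of an extended-real-valued function on `ℝ`, as a subset of `ℝ²`
(which carries the box metric `dist p q = max |p₁-q₁| |p₂-q₂|`). -/
def epiE (f : ℝ → EReal) : Set (ℝ × ℝ) := {p | f p.1 ≤ (p.2 : EReal)}

/-- `awGap A B r` is `sup_{x ∈ B̄_r} |dist(x,A) - dist(x,B)|`. -/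
def awGap (A B : Set (ℝ × ℝ)) (r : ℝ) : ℝ :=
  sSup ((fun x => |infDist x A - infDist x B|) '' closedBall (0 : ℝ × ℝ) r)

/-- Attouch–Wets convergence of a sequence of functions, via epigraphs. -/
def AWTendsto (F : ℕ → ℝ → EReal) (f : ℝ → EReal) : Prop :=
  ∀ r : ℝ, 0 < r → Tendsto (fun n => awGap (epiE (F n)) (epiE f) r) atTop (nhds 0)

/-- The basic Attouch–Wets neighbourhood `V_k(f)`. -/
def Vk (k : ℕ) (f : ℝ → EReal) : Set (ℝ → EReal) :=
  {g | awGap (epiE g) (epiE f) (k : ℝ) < 1 / (k : ℝ)}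

/-- Convexity for extended-real-valued functions on `ℝ`. -/
def ERConvex (f : ℝ → EReal) : Prop :=
  ∀ x y a b : ℝ, 0 ≤ a → 0 ≤ b → a + b = 1 →
    f (a * x + b * y) ≤ (a : EReal) * f x + (b : EReal) * f y

/-- Effective domain of an extended-real-valued function. -/
def effDom (f : ℝ → EReal) : Set ℝ := {θ | f θ < ⊤}

/-- The moment generating function of a measure on `ℝ`, with values in `(0,∞]`. -/
def mgfE (ν : Measure ℝ) : ℝ → EReal :=
  fun θ => ((∫⁻ x, ENNReal.ofReal (Real.exp (θ * x)) ∂ν : ℝ≥0∞) : EReal)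

/-- `log` of a probability, with the convention `log 0 = -∞`. -/
def elog (p : ℝ≥0∞) : EReal := if p = 0 then ⊥ else ((Real.log p.toReal : ℝ) : EReal)

/-- The empirical moment generating function estimator
`M_n(θ) = (1/n) ∑_{i<n} exp (θ X_i)`. -/
def Mn {Ω : Type*} (X : ℕ → Ω → ℝ) (n : ℕ) (ω : Ω) : ℝ → EReal :=
  fun θ => (((n : ℝ)⁻¹ * ∑ i ∈ Finset.range n, Real.exp (θ * X i ω) : ℝ) : EReal)

/-- The rate value `I_M(f) = -inf_{k ≥ 1} limsup_n (1/n) log ℙ(M_n ∈ V_k(f))`. -/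
def IM {Ω : Type*} [MeasurableSpace Ω] (P : Measure Ω) (X : ℕ → Ω → ℝ)
    (f : ℝ → EReal) : EReal :=
  - ⨅ k ∈ Set.Ici 1, limsup
      (fun n : ℕ => (((n : ℝ)⁻¹ : ℝ) : EReal) * elog (P {ω | Mn X n ω ∈ Vk k f})) atTop

/-- `f` is lower semicontinuous, convex and `[0,∞]`-valued. -/
def IsAdm0 (f : ℝ → EReal) : Prop :=
  LowerSemicontinuous f ∧ ERConvex f ∧ ∀ θ, 0 ≤ f θ

/-- The Loynes exponent estimator `δ_n = sup {θ : M_n(θ) ≤ 1} ∈ [0,∞]`. -/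
def deltaN {Ω : Type*} (X : ℕ → Ω → ℝ) (n : ℕ) (ω : Ω) : ℝ≥0∞ :=
  sSup (ENNReal.ofReal '' {θ : ℝ | Mn X n ω θ ≤ 1})

/-- `θ_μ = sup {θ : f_μ(θ) ≤ 1} ∈ [0,∞]`. -/
def thetaMu (μ : Measure ℝ) : ℝ≥0∞ := sSup (ENNReal.ofReal '' {θ : ℝ | mgfE μ θ ≤ 1})

/-- The sets `C_x` for `x ∈ [0,∞]`. -/
def CLo (x : ℝ≥0∞) : Set (ℝ → EReal) :=
  {f | (IsAdm0 f ∧ f 0 < ⊤) ∧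
    (if x = 0 then ∀ y : ℝ, 0 < y → 1 ≤ f y
     else if x = ⊤ then ∀ y : ℝ, 0 ≤ y → f y ≤ 1
     else f x.toReal = 1 ∨ (f x.toReal < 1 ∧ ∀ y : ℝ, x.toReal < y → f y = ⊤))}

/-- The Loynes rate function `I_Lo(x) = inf_{f ∈ C_x} I_M(f)`. -/
def ILo {Ω : Type*} [MeasurableSpace Ω] (P : Measure Ω) (X : ℕ → Ω → ℝ)
    (x : ℝ≥0∞) : EReal :=
  ⨅ f ∈ CLo x, IM P X f


open scoped Topology

theorem aux_min_exp_le {a b th : ℝ} (t : ℝ) (h1 : a ≤ th) (h2 : th ≤ b) :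
    min (Real.exp (a*t)) (Real.exp (b*t)) ≤ Real.exp (th*t) := by
  rcases le_total 0 t with ht | ht
  · exact (min_le_left _ _).trans (Real.exp_le_exp.2 (mul_le_mul_of_nonneg_right h1 ht))
  · exact (min_le_right _ _).trans (Real.exp_le_exp.2 (mul_le_mul_of_nonpos_right h2 ht))

theorem aux_exp_neg_le (u : ℝ) (hu : 0 ≤ u) : Real.exp (-u) ≤ 1 - u + u^2 := by
  have h1 : 1 + u ≤ Real.exp u := by linarith [Real.add_one_le_exp u]
  have hp : (0:ℝ) < 1 + u := by linarith
  have h3 : (Real.exp u)⁻¹ ≤ (1+u)⁻¹ := inv_anti₀ hp h1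
  have h4 : (1+u)⁻¹ ≤ 1 - u + u^2 := by
    rw [inv_le_iff_one_le_mul₀ hp]; nlinarith
  rw [Real.exp_neg]; linarith

theorem aux_chernoff {Ω : Type*} [MeasurableSpace Ω] (P : Measure Ω) [IsProbabilityMeasure P]
    (X : ℕ → Ω → ℝ) (μ : Measure ℝ) [IsProbabilityMeasure μ]
    (hmeas : ∀ i, Measurable (X i)) (hid : ∀ i, Measure.map (X i) P = μ)
    (hindep : ProbabilityTheory.iIndepFun X P)
    (h : ℝ → ℝ) (hh : Measurable h) (K : ℝ) (hK : 0 < K)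
    (hh0 : ∀ t, 0 ≤ h t) (hhK : ∀ t, h t ≤ K)
    (hB : 1 < ∫ t, h t ∂μ) :
    ∃ c q : ℝ, 1 < c ∧ 0 < q ∧ q < 1 ∧
      ∀ n : ℕ, (P {ω | ∑ i ∈ Finset.range n, h (X i ω) ≤ (n:ℝ) * c}).toReal ≤ q ^ n := by
  set B := ∫ t, h t ∂μ with hBdef
  set ε : ℝ := (B-1)/3 with hε
  have hεpos : 0 < ε := by simp only [hε]; linarith
  set c : ℝ := 1 + ε with hc
  set s : ℝ := ε / K^2 with hs
  have hspos : 0 < s := by positivity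
  set F : ℝ → ℝ := fun t => Real.exp ((-s) * h t) with hF
  set D : ℝ := ∫ t, F t ∂μ with hD
  have hint_h : Integrable h μ := by
    refine (integrable_const K).mono' hh.aestronglyMeasurable (ae_of_all _ fun t => ?_)
    rw [Real.norm_eq_abs, abs_of_nonneg (hh0 t)]; exact hhK t
  have hFmeas : Measurable F := (hh.const_mul (-s)).exp
  have hint_F : Integrable F μ := by
    refine (integrable_const 1).mono' hFmeas.aestronglyMeasurable (ae_of_all _ fun t => ?_)
    rw [Real.norm_eq_abs, abs_of_nonneg (Real.exp_pos _).le]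
    rw [show (1:ℝ) = Real.exp 0 by simp]
    apply Real.exp_le_exp.2
    have := hh0 t; nlinarith
  have hDle : D ≤ 1 + s^2*K^2 - s*B := by
    have hpw : ∀ t, F t ≤ (1 + s^2*K^2) - s * h t := by
      intro t
      have h1 : Real.exp (-(s * h t)) ≤ 1 - s*h t + (s*h t)^2 :=
        aux_exp_neg_le _ (mul_nonneg hspos.le (hh0 t))
      have hh2 : h t ^ 2 ≤ K ^ 2 := by nlinarith [hh0 t, hhK t]
      have h2 : (s*h t)^2 ≤ s^2*K^2 := by
        have h3 := mul_le_mul_of_nonneg_left hh2 (sq_nonneg s)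
        calc (s*h t)^2 = s^2 * h t^2 := by ring
          _ ≤ s^2*K^2 := h3
      have : F t = Real.exp (-(s * h t)) := by rw [hF]; ring_nf
      rw [this]; linarith
    have hGint : Integrable (fun t => (1 + s^2*K^2) - s * h t) μ :=
      (integrable_const _).sub (hint_h.const_mul s)
    have h2 := integral_mono hint_F hGint hpw
    have h3 : ∫ t, ((1 + s^2*K^2) - s * h t) ∂μ = 1 + s^2*K^2 - s*B := by
      rw [integral_sub (integrable_const _) (hint_h.const_mul s), integral_const,
        integral_const_mul, probReal_univ, one_smul]
    rw [h3] at h2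
    exact h2
  have hDge : Real.exp (-(s*K)) ≤ D := by
    have hpw : ∀ t, Real.exp (-(s*K)) ≤ F t := by
      intro t
      apply Real.exp_le_exp.2
      have := hhK t; nlinarith
    have := integral_mono (integrable_const _) hint_F hpw
    rwa [integral_const, probReal_univ, one_smul] at this
  have hDpos : 0 < D := lt_of_lt_of_le (Real.exp_pos _) hDge
  have hs2 : s^2*K^2 = s*ε := by
    rw [hs]; field_simp
  have hDlt : D < Real.exp (-(s*c)) := by
    have h1 : -(s*c) + 1 ≤ Real.exp (-(s*c)) := Real.add_one_le_exp _
    have h2 : D ≤ 1 - s*c - s*ε := by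
      rw [hs2] at hDle
      have : s * B = s * (1 + 3*ε) := by rw [hε]; ring_nf
      rw [this] at hDle
      rw [hc]; linarith [hDle]
    nlinarith [hspos, hεpos]
  set q : ℝ := Real.exp (s*c) * D with hq
  have hqpos : 0 < q := mul_pos (Real.exp_pos _) hDpos
  have hqlt : q < 1 := by
    have := mul_lt_mul_of_pos_left hDlt (Real.exp_pos (s*c))
    rwa [← Real.exp_add, add_neg_cancel, Real.exp_zero] at this
  refine ⟨c, q, by linarith, hqpos, hqlt, fun n => ?_⟩
  set Y : ℕ → Ω → ℝ := fun i => h ∘ X i with hY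
  have hYmeas : ∀ i, Measurable (Y i) := fun i => hh.comp (hmeas i)
  set S : Ω → ℝ := ∑ i ∈ Finset.range n, Y i with hS
  have hSapp : ∀ ω, S ω = ∑ i ∈ Finset.range n, h (X i ω) := by
    intro ω; rw [hS]; simp [hY]
  have hSmeas : Measurable S := by
    have hfe : S = fun ω => ∑ i ∈ Finset.range n, h (X i ω) := funext hSapp
    rw [hfe]
    exact Finset.measurable_sum _ fun i _ => hh.comp (hmeas i)
  have hSnonneg : ∀ ω, 0 ≤ S ω := by
    intro ω; rw [hSapp]; exact Finset.sum_nonneg fun i _ => hh0 _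
  have hint_S : Integrable (fun ω => Real.exp ((-s) * S ω)) P := by
    refine (integrable_const 1).mono' ((hSmeas.const_mul (-s)).exp).aestronglyMeasurable
      (ae_of_all _ fun ω => ?_)
    rw [Real.norm_eq_abs, abs_of_nonneg (Real.exp_pos _).le,
      show (1:ℝ) = Real.exp 0 by simp]
    apply Real.exp_le_exp.2
    have := hSnonneg ω; nlinarith
  have hcb := ProbabilityTheory.measure_le_le_exp_mul_mgf (μ := P) (X := S) ((n:ℝ)*c)
    (neg_nonpos.2 hspos.le) hint_S
  have hmgfD : ∀ i, ProbabilityTheory.mgf (Y i) P (-s) = D := by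
    intro i
    calc ProbabilityTheory.mgf (Y i) P (-s)
        = ∫ ω, Real.exp ((-s) * h (X i ω)) ∂P := rfl
      _ = ∫ t, F t ∂(Measure.map (X i) P) := by
          rw [integral_map (hmeas i).aemeasurable hFmeas.aestronglyMeasurable]
      _ = D := by rw [hid i]
  have hmgf : ProbabilityTheory.mgf S P (-s) = D ^ n := by
    rw [hS, ProbabilityTheory.iIndepFun.mgf_sum (hindep.comp _ fun i => hh) hYmeas]
    rw [Finset.prod_congr rfl fun i _ => hmgfD i, Finset.prod_const, Finset.card_range]
  have hexp : Real.exp (-(-s) * ((n:ℝ)*c)) = Real.exp (s*c) ^ n := by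
    rw [neg_neg, show s * ((n:ℝ)*c) = (n:ℝ) * (s*c) by ring, Real.exp_nat_mul]
  have hsets : {ω | S ω ≤ (n:ℝ)*c} = {ω | ∑ i ∈ Finset.range n, h (X i ω) ≤ (n:ℝ) * c} := by
    ext ω; simp [hSapp]
  rw [hsets, hmgf, hexp] at hcb
  calc (P {ω | ∑ i ∈ Finset.range n, h (X i ω) ≤ (n:ℝ) * c}).toReal
      ≤ Real.exp (s*c) ^ n * D ^ n := hcb
    _ = q ^ n := by rw [hq, mul_pow]

/-- `I_Lo` is strictly positive on `(θ_μ, ∞]`. -/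
theorem ILo_positive
    {Ω : Type*} [MeasurableSpace Ω] (P : Measure Ω) [IsProbabilityMeasure P]
    (X : ℕ → Ω → ℝ) (μ : Measure ℝ) [IsProbabilityMeasure μ]
    (hmeas : ∀ i, Measurable (X i))
    (hid : ∀ i, Measure.map (X i) P = μ)
    (hindep : ProbabilityTheory.iIndepFun X P)
    (hpos : μ (Set.Ioi (0 : ℝ)) ∈ Set.Ioo (0 : ℝ≥0∞) 1)
    (hneg : μ (Set.Iio (0 : ℝ)) ∈ Set.Ioo (0 : ℝ≥0∞) 1) :
    ∀ x : ℝ≥0∞, thetaMu μ < x → 0 < ILo P X x := by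
  intro x hx
  have htop : thetaMu μ ≠ ⊤ := hx.ne_top
  set T : ℝ := (thetaMu μ).toReal with hT
  have hTnn : 0 ≤ T := ENNReal.toReal_nonneg
  -- choose the probe point x'
  obtain ⟨x', hx'T, hx'f⟩ : ∃ x' : ℝ, T < x' ∧ ∀ f ∈ CLo x, f x' ≤ ((1:ℝ):EReal) := by
    by_cases hxt : x = ⊤
    · refine ⟨T + 1, by linarith, fun f hf => ?_⟩
      have hcond := hf.2
      rw [if_neg (by rw [hxt]; simp), if_pos hxt] at hcond
      rw [EReal.coe_one]
      exact hcond (T+1) (by linarith)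
    · have hx0 : x ≠ 0 := (zero_le.trans_lt hx).ne'
      refine ⟨x.toReal, ENNReal.toReal_strict_mono hxt hx, fun f hf => ?_⟩
      have hcond := hf.2
      rw [if_neg hx0, if_neg hxt] at hcond
      rw [EReal.coe_one]
      rcases hcond with h1 | h2
      · exact h1.le
      · exact h2.1.le
  have hx'pos : 0 < x' := lt_of_le_of_lt hTnn hx'T
  -- the mgf of μ at x' exceeds 1
  have hL : (1:ℝ≥0∞) < ∫⁻ t, ENNReal.ofReal (Real.exp (x' * t)) ∂μ := by
    by_contra hcon
    push_neg at hcon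
    have hmem : mgfE μ x' ≤ 1 := by
      show ((∫⁻ t, ENNReal.ofReal (Real.exp (x' * t)) ∂μ : ℝ≥0∞) : EReal) ≤ 1
      rw [← EReal.coe_ennreal_one]
      exact EReal.coe_ennreal_le_coe_ennreal_iff.2 hcon
    have h2 : ENNReal.ofReal x' ≤ thetaMu μ := le_sSup ⟨x', hmem, rfl⟩
    rw [ENNReal.ofReal_le_iff_le_toReal htop] at h2
    linarith
  -- the approximating family g j
  set g : ℕ → ℝ → ℝ := fun j t =>
    min (min (Real.exp ((x' - 1/((j:ℝ)+1)) * t)) (Real.exp ((x' + 1/((j:ℝ)+1)) * t))) ((j:ℝ)+1)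
    with hgdef
  have hδpos : ∀ j : ℕ, (0:ℝ) < 1/((j:ℝ)+1) := by intro j; positivity
  have hδmono : ∀ {j j' : ℕ}, j ≤ j' → 1/((j':ℝ)+1) ≤ 1/((j:ℝ)+1) := by
    intro j j' h
    apply one_div_le_one_div_of_le (by positivity)
    have : (j:ℝ) ≤ (j':ℝ) := Nat.cast_le.2 h
    linarith
  have hgmono : ∀ t, Monotone (fun j => g j t) := by
    intro t j j' hjj'
    have h1 := hδmono hjj'
    have hcast : (j:ℝ) ≤ (j':ℝ) := Nat.cast_le.2 hjj'
    refine le_min (le_min ?_ ?_) ?_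
    · exact (min_le_left _ _).trans (aux_min_exp_le t (by linarith) (by linarith [hδpos j, hδpos j']))
    · exact (min_le_left _ _).trans (aux_min_exp_le t (by linarith [hδpos j, hδpos j']) (by linarith))
    · exact (min_le_right _ _).trans (by linarith)
  have hgcont : ∀ j, Continuous (g j) := by
    intro j
    apply Continuous.min _ continuous_const
    exact (Real.continuous_exp.comp (continuous_const.mul continuous_id)).min
      (Real.continuous_exp.comp (continuous_const.mul continuous_id))
  have hg0 : ∀ j t, 0 ≤ g j t := by
    intro j t
    refine le_min (le_min (Real.exp_pos _).le (Real.exp_pos _).le) (by positivity)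
  have hgK : ∀ j t, g j t ≤ (j:ℝ)+1 := fun j t => min_le_right _ _
  have htend : ∀ t, Tendsto (fun j => g j t) atTop (𝓝 (Real.exp (x' * t))) := by
    intro t
    have hδ : Tendsto (fun j:ℕ => 1/((j:ℝ)+1)) atTop (𝓝 0) :=
      tendsto_one_div_add_atTop_nhds_zero_nat
    have e1 : Tendsto (fun j:ℕ => Real.exp ((x' - 1/((j:ℝ)+1)) * t)) atTop (𝓝 (Real.exp (x'*t))) := by
      have h := ((tendsto_const_nhds (x := x')).sub hδ).mul (tendsto_const_nhds (x := t))
      rw [sub_zero] at h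
      exact (Real.continuous_exp.tendsto _).comp h
    have e2 : Tendsto (fun j:ℕ => Real.exp ((x' + 1/((j:ℝ)+1)) * t)) atTop (𝓝 (Real.exp (x'*t))) := by
      have h := ((tendsto_const_nhds (x := x')).add hδ).mul (tendsto_const_nhds (x := t))
      rw [add_zero] at h
      exact (Real.continuous_exp.tendsto _).comp h
    have emin := e1.min e2
    rw [min_self] at emin
    have hev1 : ∀ᶠ j : ℕ in atTop,
        min (Real.exp ((x' - 1/((j:ℝ)+1)) * t)) (Real.exp ((x' + 1/((j:ℝ)+1)) * t))
          < Real.exp (x'*t) + 1 :=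
      emin.eventually (eventually_lt_nhds
        (by linarith [Real.exp_pos (x'*t)] : Real.exp (x'*t) < Real.exp (x'*t) + 1))
    have hev2 : ∀ᶠ j : ℕ in atTop, Real.exp (x'*t) + 1 ≤ (j:ℝ)+1 := by
      have hnat := tendsto_natCast_atTop_atTop (R := ℝ)
      filter_upwards [hnat.eventually_ge_atTop (Real.exp (x'*t))] with j hj
      linarith
    refine emin.congr' ?_
    filter_upwards [hev1, hev2] with j h1 h2
    exact (min_eq_left (by linarith)).symm
  -- pick j with lintegral of g j exceeding 1
  obtain ⟨j, hLj⟩ : ∃ j : ℕ, (1:ℝ≥0∞) < ∫⁻ t, ENNReal.ofReal (g j t) ∂μ := by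
    have hmeasj : ∀ j, Measurable fun t => ENNReal.ofReal (g j t) :=
      fun j => (hgcont j).measurable.ennreal_ofReal
    have htendL := lintegral_tendsto_of_tendsto_of_monotone (μ := μ)
      (fun j => (hmeasj j).aemeasurable)
      (ae_of_all _ fun t i i' hii' => ENNReal.ofReal_le_ofReal (hgmono t hii'))
      (ae_of_all _ fun t => (ENNReal.continuous_ofReal.tendsto _).comp (htend t))
    exact (htendL.eventually (eventually_gt_nhds hL)).exists
  -- convert to a Bochner integral bound
  have hLjne : ∫⁻ t, ENNReal.ofReal (g j t) ∂μ ≠ ⊤ := by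
    refine ne_of_lt (lt_of_le_of_lt (lintegral_mono fun t =>
      ENNReal.ofReal_le_ofReal (hgK j t)) ?_)
    rw [lintegral_const, measure_univ, mul_one]
    exact ENNReal.ofReal_lt_top
  have hBint : 1 < ∫ t, g j t ∂μ := by
    rw [integral_eq_lintegral_of_nonneg_ae (ae_of_all _ (hg0 j))
      (hgcont j).measurable.aestronglyMeasurable]
    have := ENNReal.toReal_strict_mono hLjne hLj
    simpa using this
  -- apply the Chernoff bound
  obtain ⟨c, q, hc1, hq0, hq1, hcher⟩ :=
    aux_chernoff P X μ hmeas hid hindep (g j) (hgcont j).measurable ((j:ℝ)+1)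
      (by positivity) (hg0 j) (hgK j) hBint
  -- choose k
  obtain ⟨k, hk⟩ := exists_nat_ge (max (max |x'| 1) (max (1/(c-1)) ((j:ℝ)+1)))
  have hkx : |x'| ≤ (k:ℝ) := le_trans (le_trans (le_max_left _ _) (le_max_left _ _)) hk
  have hk1R : 1 ≤ (k:ℝ) := le_trans (le_trans (le_max_right _ _) (le_max_left _ _)) hk
  have hk1 : 1 ≤ k := by exact_mod_cast hk1R
  have hkpos : (0:ℝ) < k := by linarith
  have hkc : 1/(k:ℝ) ≤ c - 1 := by
    have h1 : 1/(c-1) ≤ (k:ℝ) := le_trans (le_trans (le_max_left _ _) (le_max_right _ _)) hk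
    have h2 : 1/(k:ℝ) ≤ 1/(1/(c-1)) := one_div_le_one_div_of_le (one_div_pos.2 (by linarith)) h1
    rwa [one_div_one_div] at h2
  have hkδ : 1/(k:ℝ) ≤ 1/((j:ℝ)+1) := by
    apply one_div_le_one_div_of_le (by positivity)
    exact le_trans (le_trans (le_max_right _ _) (le_max_right _ _)) hk
  have hlogq : Real.log q < 0 := Real.log_neg hq0 hq1
  -- the uniform bound over CLo x
  show (0:EReal) < ⨅ f ∈ CLo x, IM P X f
  refine lt_of_lt_of_le (show (0:EReal) < ((-Real.log q : ℝ) : EReal) from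
    EReal.coe_pos.2 (by linarith)) (le_iInf₂ fun f hf => ?_)
  show ((-Real.log q : ℝ) : EReal) ≤ IM P X f
  rw [EReal.coe_neg]
  unfold IM
  rw [EReal.neg_le_neg_iff]
  refine iInf₂_le_of_le k hk1 ?_
  refine Filter.limsup_le_of_le (by isBoundedDefault) ?_
  filter_upwards [eventually_ge_atTop 1] with n hn
  have hnposR : (0:ℝ) < n := by exact_mod_cast hn
  -- event inclusion
  have hincl : {ω | Mn X n ω ∈ Vk k f} ⊆
      {ω | ∑ i ∈ Finset.range n, g j (X i ω) ≤ (n:ℝ) * c} := by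
    intro ω hω
    simp only [Vk, mem_setOf_eq] at hω
    set A := epiE (Mn X n ω) with hA
    have hpA : ((x', (1:ℝ)) : ℝ × ℝ) ∈ closedBall (0 : ℝ × ℝ) (k:ℝ) := by
      rw [mem_closedBall, Prod.dist_eq]
      apply max_le
      · simpa [Real.dist_eq] using hkx
      · simpa [Real.dist_eq] using hk1R
    have hpf : ((x', (1:ℝ)) : ℝ × ℝ) ∈ epiE f := hx'f f hf
    have hbdd : BddAbove ((fun y => |infDist y A - infDist y (epiE f)|) ''
        closedBall (0:ℝ×ℝ) (k:ℝ)) :=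
      (isCompact_closedBall _ _).bddAbove_image
        (((continuous_infDist_pt A).sub (continuous_infDist_pt (epiE f))).abs.continuousOn)
    have hle : |infDist ((x', (1:ℝ)) : ℝ × ℝ) A - infDist ((x', (1:ℝ)) : ℝ × ℝ) (epiE f)|
        ≤ awGap A (epiE f) (k:ℝ) :=
      le_csSup hbdd (mem_image_of_mem _ hpA)
    rw [infDist_zero_of_mem hpf, sub_zero, abs_of_nonneg infDist_nonneg] at hle
    have hAne : A.Nonempty := by
      refine ⟨(0, (n:ℝ)⁻¹ * ∑ i ∈ Finset.range n, Real.exp (0 * X i ω)), ?_⟩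
      simp only [hA, epiE, Mn, mem_setOf_eq]
      exact le_refl _
    obtain ⟨w, hwA, hwd⟩ := (infDist_lt_iff hAne).1 (lt_of_le_of_lt hle hω)
    rw [Prod.dist_eq, max_lt_iff] at hwd
    obtain ⟨hd1, hd2⟩ := hwd
    rw [Real.dist_eq] at hd1 hd2
    simp only [hA, epiE, Mn, mem_setOf_eq] at hwA
    have hvw : (n:ℝ)⁻¹ * ∑ i ∈ Finset.range n, Real.exp (w.1 * X i ω) ≤ w.2 :=
      EReal.coe_le_coe_iff.1 hwA
    have hw2 : w.2 ≤ c := by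
      have h1 : |1 - w.2| < 1/k := hd2
      have h2 := abs_lt.1 h1
      linarith [hkc]
    have hθ1 : x' - 1/((j:ℝ)+1) ≤ w.1 := by
      have h2 := abs_lt.1 hd1
      linarith [hkδ]
    have hθ2 : w.1 ≤ x' + 1/((j:ℝ)+1) := by
      have h2 := abs_lt.1 hd1
      linarith [hkδ]
    have hsum : ∑ i ∈ Finset.range n, g j (X i ω)
        ≤ ∑ i ∈ Finset.range n, Real.exp (w.1 * X i ω) := by
      refine Finset.sum_le_sum fun i _ => ?_
      exact le_trans (min_le_left _ _) (aux_min_exp_le _ hθ1 hθ2)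
    show ∑ i ∈ Finset.range n, g j (X i ω) ≤ (n:ℝ) * c
    have hnn : (n:ℝ) ≠ 0 := ne_of_gt hnposR
    calc ∑ i ∈ Finset.range n, g j (X i ω)
        ≤ ∑ i ∈ Finset.range n, Real.exp (w.1 * X i ω) := hsum
      _ = (n:ℝ) * ((n:ℝ)⁻¹ * ∑ i ∈ Finset.range n, Real.exp (w.1 * X i ω)) := by
          rw [← mul_assoc, mul_inv_cancel₀ hnn, one_mul]
      _ ≤ (n:ℝ) * c := mul_le_mul_of_nonneg_left (le_trans hvw hw2) hnposR.le
  have hPle : (P {ω | Mn X n ω ∈ Vk k f}).toReal ≤ q ^ n :=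
    le_trans (ENNReal.toReal_mono (measure_ne_top _ _) (measure_mono hincl)) (hcher n)
  -- term bound
  by_cases hP0 : P {ω | Mn X n ω ∈ Vk k f} = 0
  · unfold elog
    rw [if_pos hP0, EReal.coe_mul_bot_of_pos (inv_pos.2 hnposR)]
    exact bot_le
  · unfold elog
    rw [if_neg hP0, ← EReal.coe_mul, EReal.coe_le_coe_iff]
    have hpt : 0 < (P {ω | Mn X n ω ∈ Vk k f}).toReal :=
      ENNReal.toReal_pos hP0 (measure_ne_top _ _)
    have hlog : Real.log (P {ω | Mn X n ω ∈ Vk k f}).toReal ≤ (n:ℝ) * Real.log q := by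
      rw [← Real.log_pow]
      exact Real.log_le_log hpt hPle
    calc (n:ℝ)⁻¹ * Real.log (P {ω | Mn X n ω ∈ Vk k f}).toReal
        ≤ (n:ℝ)⁻¹ * ((n:ℝ) * Real.log q) :=
          mul_le_mul_of_nonneg_left hlog (by positivity)
      _ = Real.log q := by field_simp

end
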